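/- If Q > 0 satisfies the fixed point equation Q = (1/N) ∫₀^A p(x) w(x;Q) dx, then Q < 1. -/

import Mathlib

open MeasureTheory Real Set Filter

/-- `Λ(x,s) = ∫_s^x θ(t) dt`. -/
noncomputable def Lam (θ : ℝ → ℝ) (x s : ℝ) : ℝ := ∫ t in s..x, θ t

/-- `w(x;Q) = Q e^{-γx} ∫₀^x e^{γs} θ(s) e^{-Q Λ(x,s)} ds`. -/
noncomputable def w (γ : ℝ) (θ : ℝ → ℝ) (Q x : ℝ) : ℝ :=
  Q * Real.exp (-γ * x) * ∫ s in (0:ℝ)..x, Real.exp (γ * s) * θ s * Real.exp (-Q * Lam θ x s)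

/-- a positive solution of `Q = (1/N)∫₀^A p(x) w(x;Q) dx` satisfies `Q < 1`. -/
theorem fixed_point_lt_one (γ A N : ℝ) (hγ : 0 < γ) (hA : 0 < A) (hN : 0 < N)
    (θ p : ℝ → ℝ)
    (hθc : ContinuousOn θ (Set.Icc 0 A)) (hθpos : ∀ x ∈ Set.Icc 0 A, 0 < θ x)
    (hpc : ContinuousOn p (Set.Icc 0 A)) (hppos : ∀ x ∈ Set.Icc 0 A, 0 < p x)
    (hnorm : (1/N) * ∫ x in (0:ℝ)..A, p x = 1)
    (Q : ℝ) (hQ : 0 < Q)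
    (hfix : Q = (1/N) * ∫ x in (0:ℝ)..A, p x * w γ θ Q x) :
    Q < 1 := by
  have hA0 : (0:ℝ) ≤ A := hA.le
  -- continuous extension of θ to all of ℝ
  set cl : ℝ → ℝ := fun t => min (max t 0) A with hcldef
  have hclcont : Continuous cl := (continuous_id.max continuous_const).min continuous_const
  have hclmem : ∀ t, cl t ∈ Icc (0:ℝ) A :=
    fun t => ⟨le_min (le_max_right _ _) hA0, min_le_right _ _⟩
  have hcleq : ∀ t ∈ Icc (0:ℝ) A, cl t = t := by
    intro t ht
    simp only [hcldef, max_eq_left ht.1, min_eq_left ht.2]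
  set θ' : ℝ → ℝ := fun t => θ (cl t) with hθ'def
  have hθ' : Continuous θ' := hθc.comp_continuous hclcont hclmem
  have hθ'pos : ∀ t, 0 < θ' t := fun t => hθpos _ (hclmem t)
  have hθ'eq : ∀ t ∈ Icc (0:ℝ) A, θ' t = θ t := by
    intro t ht; simp only [hθ'def, hcleq t ht]
  -- antiderivative
  set G : ℝ → ℝ := fun s => ∫ t in (0:ℝ)..s, θ' t with hGdef
  have hGderiv : ∀ s, HasDerivAt G (θ' s) s := fun s =>
    intervalIntegral.integral_hasDerivAt_right (hθ'.intervalIntegrable _ _)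
      (hθ'.stronglyMeasurableAtFilter _ _) hθ'.continuousAt
  have hGcont : Continuous G :=
    continuous_iff_continuousAt.2 fun s => (hGderiv s).continuousAt
  have hGsub : ∀ s x : ℝ, (∫ t in s..x, θ' t) = G x - G s := by
    intro s x
    exact (intervalIntegral.integral_interval_sub_left (hθ'.intervalIntegrable 0 x)
      (hθ'.intervalIntegrable 0 s)).symm
  set L : ℝ := G A with hLdef
  have hGleL : ∀ x, x ≤ A → G x ≤ L := by
    intro x hx
    have h : 0 ≤ ∫ t in x..A, θ' t :=
      intervalIntegral.integral_nonneg hx fun t _ => (hθ'pos t).le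
    rw [hGsub x A] at h; linarith
  -- key bound on w
  have hwle : ∀ x ∈ Icc (0:ℝ) A, w γ θ Q x ≤ 1 - Real.exp (-Q * L) := by
    intro x hx
    obtain ⟨hx0, hxA⟩ := hx
    -- rewrite inner integral in terms of θ', G
    have hIcongr : (∫ s in (0:ℝ)..x, Real.exp (γ * s) * θ s * Real.exp (-Q * Lam θ x s)) =
        ∫ s in (0:ℝ)..x, Real.exp (γ * s) * θ' s * Real.exp (-Q * (G x - G s)) := by
      apply intervalIntegral.integral_congr
      intro s hs
      rw [uIcc_of_le hx0] at hs
      have hs0A : s ∈ Icc (0:ℝ) A := ⟨hs.1, hs.2.trans hxA⟩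
      have hLam : Lam θ x s = G x - G s := by
        rw [Lam, show (∫ t in s..x, θ t) = ∫ t in s..x, θ' t from
          (intervalIntegral.integral_congr (fun t ht => by
            have : t ∈ Icc (0:ℝ) A := by
              rcases le_total s x with h | h
              · rw [uIcc_of_le h] at ht; exact ⟨hs.1.trans ht.1, ht.2.trans hxA⟩
              · rw [uIcc_of_ge h] at ht; exact ⟨hx0.trans ht.1, ht.2.trans hs0A.2⟩
            exact (hθ'eq t this).symm)), hGsub]
      simp only [hLam, hθ'eq s hs0A]
    -- FTC for the exact integral
    have hF : ∀ s : ℝ, HasDerivAt (fun u => Real.exp (-Q * (G x - G u)))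
        (Real.exp (-Q * (G x - G s)) * (Q * θ' s)) s := by
      intro s
      have h1 : HasDerivAt (fun u => -Q * (G x - G u)) (Q * θ' s) s := by
        have := (((hGderiv s).const_sub (G x)).const_mul (-Q))
        rwa [show -Q * -θ' s = Q * θ' s by ring] at this
      exact h1.exp
    have hcontint : Continuous fun s => Real.exp (-Q * (G x - G s)) * (Q * θ' s) :=
      ((continuous_const.mul (continuous_const.sub hGcont)).rexp).mul (continuous_const.mul hθ')
    have hFTC : (∫ s in (0:ℝ)..x, Real.exp (-Q * (G x - G s)) * (Q * θ' s)) =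
        1 - Real.exp (-Q * G x) := by
      rw [intervalIntegral.integral_eq_sub_of_hasDerivAt (fun s _ => hF s)
        (hcontint.intervalIntegrable 0 x)]
      have hG0 : G 0 = 0 := intervalIntegral.integral_same
      rw [hG0, sub_self, mul_zero, Real.exp_zero, sub_zero]
    have hJ : Q * ∫ s in (0:ℝ)..x, θ' s * Real.exp (-Q * (G x - G s)) =
        1 - Real.exp (-Q * G x) := by
      rw [← hFTC, ← intervalIntegral.integral_const_mul]
      apply intervalIntegral.integral_congr
      intro s _; ring
    -- monotone bound e^{γs} ≤ e^{γx}
    have hImono : (∫ s in (0:ℝ)..x, Real.exp (γ * s) * θ' s * Real.exp (-Q * (G x - G s))) ≤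
        ∫ s in (0:ℝ)..x, Real.exp (γ * x) * (θ' s * Real.exp (-Q * (G x - G s))) := by
      apply intervalIntegral.integral_mono_on hx0
      · exact (((continuous_const.mul continuous_id).rexp.mul hθ').mul
          ((continuous_const.mul (continuous_const.sub hGcont)).rexp)).intervalIntegrable 0 x
      · exact (continuous_const.mul (hθ'.mul
          ((continuous_const.mul (continuous_const.sub hGcont)).rexp))).intervalIntegrable 0 x
      · intro s hs
        have hes : Real.exp (γ * s) ≤ Real.exp (γ * x) :=
          Real.exp_le_exp.2 (by nlinarith [hs.2, hγ.le])
        have hnn : 0 ≤ θ' s * Real.exp (-Q * (G x - G s)) := by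
          have := (hθ'pos s).le; positivity
        calc Real.exp (γ * s) * θ' s * Real.exp (-Q * (G x - G s))
            = Real.exp (γ * s) * (θ' s * Real.exp (-Q * (G x - G s))) := by ring
          _ ≤ Real.exp (γ * x) * (θ' s * Real.exp (-Q * (G x - G s))) :=
              mul_le_mul_of_nonneg_right hes hnn
    rw [intervalIntegral.integral_const_mul] at hImono
    -- assemble
    have hQexp : (0:ℝ) ≤ Q * Real.exp (-γ * x) := by positivity
    calc w γ θ Q x
        = Q * Real.exp (-γ * x) *
            ∫ s in (0:ℝ)..x, Real.exp (γ * s) * θ' s * Real.exp (-Q * (G x - G s)) := by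
          rw [w, hIcongr]
      _ ≤ Q * Real.exp (-γ * x) * (Real.exp (γ * x) *
            ∫ s in (0:ℝ)..x, θ' s * Real.exp (-Q * (G x - G s))) :=
          mul_le_mul_of_nonneg_left hImono hQexp
      _ = Q * ∫ s in (0:ℝ)..x, θ' s * Real.exp (-Q * (G x - G s)) := by
          rw [show (-γ * x) = -(γ * x) by ring, Real.exp_neg]
          field_simp
      _ = 1 - Real.exp (-Q * G x) := hJ
      _ ≤ 1 - Real.exp (-Q * L) := by
          have : Real.exp (-Q * L) ≤ Real.exp (-Q * G x) :=
            Real.exp_le_exp.2 (by nlinarith [hGleL x hxA, hQ.le])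
          linarith
  -- w is nonnegative on [0,A]
  have hwnonneg : ∀ x ∈ Icc (0:ℝ) A, 0 ≤ w γ θ Q x := by
    intro x hx
    have hI : 0 ≤ ∫ s in (0:ℝ)..x, Real.exp (γ * s) * θ s * Real.exp (-Q * Lam θ x s) := by
      apply intervalIntegral.integral_nonneg hx.1
      intro s hs
      have hθs := (hθpos s ⟨hs.1, hs.2.trans hx.2⟩).le
      positivity
    rw [w]; positivity
  -- ∫ p = N
  have hintp : (∫ x in (0:ℝ)..A, p x) = N := by
    field_simp at hnorm
    linarith
  set C : ℝ := 1 - Real.exp (-Q * L) with hCdef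
  have hC1 : C < 1 := by
    have := Real.exp_pos (-Q * L)
    simp only [hCdef]; linarith
  have hpint : IntegrableOn p (Ioc 0 A) volume :=
    (hpc.integrableOn_Icc).mono_set Ioc_subset_Icc_self
  have hint : (∫ x in (0:ℝ)..A, p x * w γ θ Q x) ≤ C * N := by
    have hmono : (∫ x in Ioc (0:ℝ) A, p x * w γ θ Q x) ≤ ∫ x in Ioc (0:ℝ) A, C * p x := by
      apply MeasureTheory.integral_mono_of_nonneg
      · refine (ae_restrict_iff' measurableSet_Ioc).2 (ae_of_all _ fun x hx => ?_)
        have hx' : x ∈ Icc (0:ℝ) A := Ioc_subset_Icc_self hx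
        exact mul_nonneg (hppos x hx').le (hwnonneg x hx')
      · exact hpint.const_mul C
      · refine (ae_restrict_iff' measurableSet_Ioc).2 (ae_of_all _ fun x hx => ?_)
        have hx' : x ∈ Icc (0:ℝ) A := Ioc_subset_Icc_self hx
        calc p x * w γ θ Q x ≤ p x * C :=
              mul_le_mul_of_nonneg_left (hwle x hx') (hppos x hx').le
          _ = C * p x := mul_comm _ _
    rw [intervalIntegral.integral_of_le hA0]
    calc (∫ x in Ioc (0:ℝ) A, p x * w γ θ Q x) ≤ ∫ x in Ioc (0:ℝ) A, C * p x := hmono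
      _ = C * ∫ x in Ioc (0:ℝ) A, p x := MeasureTheory.integral_const_mul _ _
      _ = C * ∫ x in (0:ℝ)..A, p x := by rw [intervalIntegral.integral_of_le hA0]
      _ = C * N := by rw [hintp]
  rw [hfix]
  calc (1/N) * ∫ x in (0:ℝ)..A, p x * w γ θ Q x
      ≤ (1/N) * (C * N) := by
        apply mul_le_mul_of_nonneg_left hint
        positivity
    _ = C := by field_simp
    _ < 1 := hC1
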